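/- Let Γ be a discrete group. Suppose there exist ε > 0 and a net (f_i)_{i∈I} of positive-definite functions on Γ vanishing at infinity with f_i(e) = 1, such that for every g ∈ Γ there is i₀ ∈ I with: for all i ≥ i₀, the number f_i(g) is real and f_i(g) ≥ ε. Then Γ has the Haagerup property: there exists a net (h_j)_{j∈J} of positive-definite functions on Γ vanishing at infinity with h_j(e) = 1 such that h_j(g) → 1 for every g ∈ Γ. -/

import Mathlib

set_option maxHeartbeats 1000000

open scoped ComplexOrder

/-- A function `f : Γ → ℂ` on a group is positive-definite if all the matrices
`[f(g_k⁻¹ g_j)]` are positive semi-definite. -/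
def IsPosDefFn {Γ : Type} [Group Γ] (f : Γ → ℂ) : Prop :=
  ∀ (n : ℕ) (g : Fin n → Γ) (c : Fin n → ℂ),
    0 ≤ ∑ j, ∑ k, c j * (starRingEnd ℂ) (c k) * f ((g k)⁻¹ * g j)

/-- A function on a discrete group vanishes at infinity if each of its superlevel sets
`{g : δ ≤ |f g|}` (for `δ > 0`) is finite. -/
def VanishesAtInftyDiscrete {Γ : Type} (f : Γ → ℂ) : Prop :=
  ∀ δ : ℝ, 0 < δ → {g : Γ | δ ≤ ‖f g‖}.Finite

namespace HaagerupAux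

open Finset Filter

variable {Γ : Type} [Group Γ]

lemma real_of_nonneg {z : ℂ} (h : 0 ≤ z) : z = (z.re : ℂ) := by
  obtain ⟨h1, h2⟩ := Complex.nonneg_iff.mp h
  exact Complex.ext rfl (by simp [← h2])

lemma posdef_sum {f : Γ → ℂ} (hf : IsPosDefFn f) (ι : Type) [Fintype ι]
    (p : ι → Γ) (w : ι → ℂ) :
    0 ≤ ∑ j, ∑ k, w j * (starRingEnd ℂ) (w k) * f ((p k)⁻¹ * p j) := by
  classical
  let e := (Fintype.equivFin ι).symm
  calc (0:ℂ) ≤ ∑ j, ∑ k, (w ∘ e) j * (starRingEnd ℂ) ((w ∘ e) k)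
        * f (((p ∘ e) k)⁻¹ * (p ∘ e) j) := hf _ _ _
    _ = ∑ j, ∑ k, w j * (starRingEnd ℂ) (w k) * f ((p k)⁻¹ * p j) := by
        rw [← Equiv.sum_comp e
          (fun j => ∑ k, w j * (starRingEnd ℂ) (w k) * f ((p k)⁻¹ * p j))]
        refine Finset.sum_congr rfl fun j _ => ?_
        exact Equiv.sum_comp e fun k => w (e j) * (starRingEnd ℂ) (w k) * f ((p k)⁻¹ * p (e j))

lemma herm {f : Γ → ℂ} (hf : IsPosDefFn f) (g : Γ) :
    (starRingEnd ℂ) (f g) = f g⁻¹ := by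
  have h1 := hf 2 ![1, g] ![1, 1]
  have h2 := hf 2 ![1, g] ![1, Complex.I]
  have h0 := hf 1 ![1] ![1]
  simp [Fin.sum_univ_two, Fin.sum_univ_one] at h0 h1 h2
  rw [Complex.nonneg_iff] at h0 h1 h2
  obtain ⟨-, h0im⟩ := h0
  obtain ⟨-, h1im⟩ := h1
  obtain ⟨-, h2im⟩ := h2
  simp [Complex.add_im, Complex.mul_im, Complex.I_re, Complex.I_im] at h1im h2im
  apply Complex.ext <;> simp [Complex.conj_re, Complex.conj_im] <;> linarith [h0im.symm]

lemma norm_le_one {f : Γ → ℂ} (hf : IsPosDefFn f) (h1 : f 1 = 1) (g : Γ) :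
    ‖f g‖ ≤ 1 := by
  rcases eq_or_ne (f g) 0 with h | h
  · simp [h]
  · set c : ℂ := -(starRingEnd ℂ) (f g) / ‖f g‖ with hc
    have hkey := hf 2 ![1, g] ![1, c]
    simp [Fin.sum_univ_two, h1] at hkey
    have habs : ((‖f g‖ : ℝ) : ℂ) ≠ 0 := by
      simpa using h
    have hcfg : c * f g = -‖f g‖ := by
      rw [hc, div_mul_eq_mul_div, neg_mul, mul_comm, Complex.mul_conj,
        Complex.normSq_eq_norm_sq]
      rw [neg_div]
      congr 1
      rw [pow_two]
      push_cast
      field_simp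
    have hconj : (starRingEnd ℂ) c * f g⁻¹ = -‖f g‖ := by
      rw [← herm hf g, ← map_mul, hcfg]
      simp
    have hnormc : c * (starRingEnd ℂ) c = 1 := by
      have habsc : ‖c‖ = 1 := by
        simp [hc, norm_div, Complex.norm_conj, Complex.norm_real,
          _root_.abs_of_nonneg (norm_nonneg (f g)),
          div_self (norm_ne_zero_iff.mpr h)]
      rw [Complex.mul_conj, Complex.normSq_eq_norm_sq, habsc]
      simp
    rw [hconj, hcfg, hnormc] at hkey
    rw [Complex.nonneg_iff] at hkey
    obtain ⟨hre, -⟩ := hkey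
    simp at hre ⊢
    linarith

/-- The Gram-type sesquilinear pairing of two weighted tuples. -/
noncomputable def BB (f : Γ → ℂ) {m n : ℕ} (p : Fin m → Γ) (w : Fin m → ℂ)
    (q : Fin n → Γ) (v : Fin n → ℂ) : ℂ :=
  ∑ j, ∑ k, w j * (starRingEnd ℂ) (v k) * f ((q k)⁻¹ * p j)

lemma BB_self_nonneg {f : Γ → ℂ} (hf : IsPosDefFn f) {m : ℕ}
    (p : Fin m → Γ) (w : Fin m → ℂ) : 0 ≤ BB f p w p w := hf m p w

lemma BB_conj {f : Γ → ℂ} (hh : ∀ g, (starRingEnd ℂ) (f g) = f g⁻¹)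
    {m n : ℕ} (p : Fin m → Γ) (w : Fin m → ℂ) (q : Fin n → Γ) (v : Fin n → ℂ) :
    BB f q v p w = (starRingEnd ℂ) (BB f p w q v) := by
  unfold BB
  rw [map_sum, Finset.sum_comm]
  refine Finset.sum_congr rfl fun k _ => ?_
  rw [map_sum]
  refine Finset.sum_congr rfl fun j _ => ?_
  rw [map_mul, map_mul, Complex.conj_conj, hh]
  rw [mul_inv_rev, inv_inv]
  ring

lemma BB_append_left {f : Γ → ℂ} {m m' n : ℕ} (p : Fin m → Γ) (w : Fin m → ℂ)
    (p' : Fin m' → Γ) (w' : Fin m' → ℂ) (q : Fin n → Γ) (v : Fin n → ℂ) :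
    BB f (Fin.append p p') (Fin.append w w') q v = BB f p w q v + BB f p' w' q v := by
  unfold BB
  rw [Fin.sum_univ_add]
  simp [Fin.append_left, Fin.append_right]

lemma BB_append_right {f : Γ → ℂ} {m n n' : ℕ} (p : Fin m → Γ) (w : Fin m → ℂ)
    (q : Fin n → Γ) (v : Fin n → ℂ) (q' : Fin n' → Γ) (v' : Fin n' → ℂ) :
    BB f p w (Fin.append q q') (Fin.append v v') = BB f p w q v + BB f p w q' v' := by
  unfold BB
  rw [← Finset.sum_add_distrib]
  refine Finset.sum_congr rfl fun j _ => ?_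
  rw [Fin.sum_univ_add]
  simp [Fin.append_left, Fin.append_right]

lemma BB_smul_left {f : Γ → ℂ} {m n : ℕ} (a : ℂ) (p : Fin m → Γ) (w : Fin m → ℂ)
    (q : Fin n → Γ) (v : Fin n → ℂ) :
    BB f p (fun j => a * w j) q v = a * BB f p w q v := by
  unfold BB
  rw [Finset.mul_sum]
  refine Finset.sum_congr rfl fun j _ => ?_
  rw [Finset.mul_sum]
  refine Finset.sum_congr rfl fun k _ => ?_
  ring

lemma BB_smul_right {f : Γ → ℂ} {m n : ℕ} (a : ℂ) (p : Fin m → Γ) (w : Fin m → ℂ)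
    (q : Fin n → Γ) (v : Fin n → ℂ) :
    BB f p w q (fun k => a * v k) = (starRingEnd ℂ) a * BB f p w q v := by
  unfold BB
  rw [Finset.mul_sum]
  refine Finset.sum_congr rfl fun j _ => ?_
  rw [Finset.mul_sum]
  refine Finset.sum_congr rfl fun k _ => ?_
  rw [map_mul]
  ring

lemma BB_translate (f : Γ → ℂ) {m n : ℕ} (g : Γ) (p : Fin m → Γ) (w : Fin m → ℂ)
    (q : Fin n → Γ) (v : Fin n → ℂ) :
    BB f (fun j => g * p j) w (fun k => g * q k) v = BB f p w q v := by
  unfold BB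
  refine Finset.sum_congr rfl fun j _ => Finset.sum_congr rfl fun k _ => ?_
  congr 1
  group

/-- Cauchy–Schwarz for the pairing. -/
lemma BB_cs {f : Γ → ℂ} (hf : IsPosDefFn f) (hh : ∀ g, (starRingEnd ℂ) (f g) = f g⁻¹)
    {m n : ℕ} (p : Fin m → Γ) (w : Fin m → ℂ) (q : Fin n → Γ) (v : Fin n → ℂ)
    (hpos : 0 < (BB f q v q v).re) :
    ‖BB f p w q v‖ ^ 2 ≤ (BB f p w p w).re * (BB f q v q v).re := by
  set C := (BB f q v q v).re with hCdef
  set A := (BB f p w p w).re with hAdef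
  set β := BB f p w q v with hβdef
  have hq : BB f q v q v = (C : ℂ) := real_of_nonneg (BB_self_nonneg hf q v)
  have hp : BB f p w p w = (A : ℂ) := real_of_nonneg (BB_self_nonneg hf p w)
  have hqp : BB f q v p w = (starRingEnd ℂ) β := BB_conj hh p w q v
  have key := BB_self_nonneg hf (Fin.append p q)
    (Fin.append (fun j => (C:ℂ) * w j) (fun k => (-β) * v k))
  rw [BB_append_left, BB_append_right, BB_append_right] at key
  rw [BB_smul_left, BB_smul_left, BB_smul_right, BB_smul_right,
    BB_smul_left, BB_smul_left, BB_smul_right, BB_smul_right] at key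
  rw [hq, hp, hqp, ← hβdef] at key
  have hconjC : (starRingEnd ℂ) ((C:ℂ)) = (C:ℂ) := Complex.conj_ofReal C
  rw [hconjC] at key
  simp only [map_neg] at key
  have hbb : (starRingEnd ℂ) β * β = (‖β‖:ℂ)^2 := by
    rw [mul_comm, Complex.mul_conj, Complex.normSq_eq_norm_sq]
    push_cast
    ring
  have heq : (↑C * (↑C * ↑A) + ↑C * (-(starRingEnd ℂ) β * β)
      + (-β * (↑C * (starRingEnd ℂ) β) + -β * (-(starRingEnd ℂ) β * ↑C)))
      = ((C^2*A - C*‖β‖^2 : ℝ) : ℂ) := by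
    push_cast
    linear_combination (-(C:ℂ)) * hbb
  rw [heq, Complex.zero_le_real] at key
  nlinarith

lemma BB_translate_posdef {f : Γ → ℂ} (hf : IsPosDefFn f) {m : ℕ}
    (p : Fin m → Γ) (w : Fin m → ℂ) :
    IsPosDefFn (fun g => BB f (fun j => g * p j) w p w) := by
  intro n gs d
  refine le_of_le_of_eq (posdef_sum hf (Fin n × Fin m)
    (fun jx => gs jx.1 * p jx.2) (fun jx => d jx.1 * w jx.2)) ?_
  simp only [Fintype.sum_prod_type]
  refine Finset.sum_congr rfl fun j _ => ?_
  rw [Finset.sum_comm]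
  refine Finset.sum_congr rfl fun k _ => ?_
  simp only [BB]
  rw [Finset.mul_sum]
  refine Finset.sum_congr rfl fun x _ => ?_
  rw [Finset.mul_sum]
  refine Finset.sum_congr rfl fun y _ => ?_
  rw [map_mul]
  have harg : (gs k * p y)⁻¹ * (gs j * p x) = (p y)⁻¹ * ((gs k)⁻¹ * gs j * p x) := by
    group
  rw [harg]
  ring

end HaagerupAux

open HaagerupAux Finset Filter

/-- If a discrete group `Γ` admits `ε > 0` and a net of normalized positive-definite
functions vanishing at infinity which, at every point, are eventually real-valued and `≥ ε`,
then `Γ` has the Haagerup property. -/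
theorem haagerup_of_eventually_separated_posdef
    {Γ : Type} [Group Γ]
    (ε : ℝ) (hε : 0 < ε)
    (I : Type) (pI : Preorder I) (hne : Nonempty I) (hdir : IsDirected I (· ≤ ·))
    (f : I → Γ → ℂ)
    (hvan : ∀ i, VanishesAtInftyDiscrete (f i))
    (hpd : ∀ i, IsPosDefFn (f i))
    (hnorm : ∀ i, f i 1 = 1)
    (hsep : ∀ g : Γ, ∃ i₀ : I, ∀ i, i₀ ≤ i → (ε : ℂ) ≤ f i g) :
    ∃ (J : Type) (_ : Preorder J), Nonempty J ∧ IsDirected J (· ≤ ·) ∧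
      ∃ h : J → Γ → ℂ,
        (∀ j, VanishesAtInftyDiscrete (h j) ∧ IsPosDefFn (h j) ∧ h j 1 = 1) ∧
        ∀ g : Γ, ∀ δ : ℝ, 0 < δ → ∃ j₀ : J, ∀ j, j₀ ≤ j → ‖h j g - 1‖ < δ := by
  classical
  letI := pI
  haveI := hne
  haveI : (atTop : Filter I).NeBot := Filter.atTop_neBot_iff.mpr ⟨hne, hdir⟩
  set U : Ultrafilter I := Ultrafilter.of atTop with hUdef
  have hU : (U : Filter I) ≤ atTop := Ultrafilter.of_le _
  -- the cluster limit φ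
  have hlim : ∀ g : Γ, ∃ z ∈ Metric.closedBall (0:ℂ) 1,
      Tendsto (fun i => f i g) (U : Filter I) (nhds z) := by
    intro g
    have hcomp : IsCompact (Metric.closedBall (0:ℂ) 1) := isCompact_closedBall 0 1
    have hmem : ∀ i, f i g ∈ Metric.closedBall (0:ℂ) 1 := by
      intro i
      rw [Metric.mem_closedBall, dist_zero_right]
      exact norm_le_one (hpd i) (hnorm i) g
    have := hcomp.ultrafilter_le_nhds (U.map (fun i => f i g))
      (by
        rw [Ultrafilter.coe_map, Filter.le_principal_iff, Filter.mem_map]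
        exact Filter.univ_mem' hmem)
    obtain ⟨z, hz, hle⟩ := this
    exact ⟨z, hz, by rwa [Ultrafilter.coe_map] at hle⟩
  choose φ hφball hφtend using hlim
  -- a helper for passing order facts to the limit
  have hle_lim : ∀ (a : ℝ) (u : I → ℂ) (z : ℂ), Tendsto u (U : Filter I) (nhds z) →
      (∀ᶠ i in (U : Filter I), (a:ℂ) ≤ u i) → (a:ℂ) ≤ z := by
    intro a u z htend hev
    rw [Complex.le_def]
    constructor
    · have h1 : Tendsto (fun i => (u i).re) (U : Filter I) (nhds z.re) :=
        (Complex.continuous_re.tendsto z).comp htend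
      have h2 : ∀ᶠ i in (U : Filter I), a ≤ (u i).re := by
        filter_upwards [hev] with i hi
        simpa using (Complex.le_def.mp hi).1
      simpa using ge_of_tendsto h1 h2
    · have h3 : Tendsto (fun i => (u i).im) (U : Filter I) (nhds z.im) :=
        (Complex.continuous_im.tendsto z).comp htend
      have h4 : ∀ᶠ i in (U : Filter I), (u i).im = 0 := by
        filter_upwards [hev] with i hi
        have := (Complex.le_def.mp hi).2
        simpa using this.symm
      have h5 : Tendsto (fun i => (u i).im) (U : Filter I) (nhds 0) :=
        Tendsto.congr' (by filter_upwards [h4] with i hi; exact hi.symm)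
          tendsto_const_nhds
      have h6 := tendsto_nhds_unique h3 h5
      simp [h6]
  have hφpd : IsPosDefFn φ := by
    intro n g c
    have htend : Tendsto
        (fun i => ∑ j, ∑ k, c j * (starRingEnd ℂ) (c k) * f i ((g k)⁻¹ * g j))
        (U : Filter I)
        (nhds (∑ j, ∑ k, c j * (starRingEnd ℂ) (c k) * φ ((g k)⁻¹ * g j))) := by
      refine tendsto_finset_sum _ fun j _ => tendsto_finset_sum _ fun k _ => ?_
      exact (hφtend _).const_mul _
    have := hle_lim 0 _ _ htend
      (Filter.Eventually.of_forall fun i => by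
        simpa using hpd i n g c)
    simpa using this
  have hφ1 : φ 1 = 1 := by
    have h1 : Tendsto (fun i => f i 1) (U : Filter I) (nhds 1) := by
      refine Tendsto.congr (fun i => (hnorm i).symm) tendsto_const_nhds
    exact tendsto_nhds_unique (hφtend 1) h1
  have hφε : ∀ g, (ε:ℂ) ≤ φ g := by
    intro g
    obtain ⟨i₀, hi₀⟩ := hsep g
    refine hle_lim ε _ _ (hφtend g) ?_
    have : ∀ᶠ i in (atTop : Filter I), (ε:ℂ) ≤ f i g :=
      Filter.eventually_atTop.mpr ⟨i₀, hi₀⟩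
    exact this.filter_mono hU
  have hφherm := herm hφpd
  -- the infimum of Gram norms over convex weights
  set S : Set ℝ := {r | ∃ (m : ℕ) (p : Fin m → Γ) (w : Fin m → ℂ),
    (∀ j, 0 ≤ w j) ∧ (∑ j, w j) = 1 ∧ r = (BB φ p w p w).re} with hSdef
  have hSne : S.Nonempty := by
    refine ⟨1, 1, fun _ => 1, fun _ => 1, fun _ => zero_le_one, by simp, ?_⟩
    simp [BB, hφ1]
  have hSlb : ∀ r ∈ S, (0:ℝ) ≤ r := by
    rintro r ⟨m, p, w, -, -, rfl⟩
    exact (Complex.nonneg_iff.mp (BB_self_nonneg hφpd p w)).1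
  set m₀ : ℝ := sInf S with hm₀def
  -- main finitary approximation lemma
  have main : ∀ (F : Finset Γ) (δ : ℝ), 0 < δ → ∃ h : Γ → ℂ,
      VanishesAtInftyDiscrete h ∧ IsPosDefFn h ∧ h 1 = 1 ∧
      ∀ g ∈ F, ‖h g - 1‖ < δ := by
    intro F δ hδ
    set δ' : ℝ := (ε * δ / 8)^2 with hδ'def
    have hδ'pos : 0 < δ' := by positivity
    have hex : ∃ r ∈ S, r < m₀ + δ' := by
      by_contra hcon
      push_neg at hcon
      have : m₀ + δ' ≤ m₀ := le_csInf hSne hcon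
      linarith
    obtain ⟨r, hrS, hrlt⟩ := hex
    obtain ⟨m, p, w, hw0, hw1, rfl⟩ := hrS
    set Qc : ℝ := (BB φ p w p w).re with hQcdef
    have hQring : BB φ p w p w = (Qc : ℂ) := real_of_nonneg (BB_self_nonneg hφpd p w)
    have hεQ : ε^2 ≤ Qc := by
      have hBone : BB φ (fun _ : Fin 1 => (1:Γ)) (fun _ : Fin 1 => (1:ℂ))
          (fun _ : Fin 1 => (1:Γ)) (fun _ : Fin 1 => (1:ℂ)) = 1 := by
        simp [BB, hφ1]
      have hcs := BB_cs hφpd hφherm p w (fun _ : Fin 1 => (1:Γ)) (fun _ : Fin 1 => (1:ℂ))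
        (by rw [hBone]; norm_num)
      rw [hBone] at hcs
      simp only [Complex.one_re, mul_one] at hcs
      have hsum : BB φ p w (fun _ : Fin 1 => (1:Γ)) (fun _ : Fin 1 => (1:ℂ))
          = ∑ j, w j * φ (p j) := by
        simp [BB]
      have hre : ε ≤ (BB φ p w (fun _ : Fin 1 => (1:Γ)) (fun _ : Fin 1 => (1:ℂ))).re := by
        rw [hsum, Complex.re_sum]
        have hterm : ∀ j, (w j).re * ε ≤ (w j * φ (p j)).re := by
          intro j
          have hwim : (w j).im = 0 := ((Complex.nonneg_iff.mp (hw0 j)).2).symm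
          have hwre : 0 ≤ (w j).re := (Complex.nonneg_iff.mp (hw0 j)).1
          have hφre : ε ≤ (φ (p j)).re := by
            have := (Complex.le_def.mp (hφε (p j))).1
            simpa using this
          rw [Complex.mul_re, hwim]
          simp only [zero_mul, sub_zero]
          nlinarith
        have hwsum : (∑ j, (w j).re) = 1 := by
          have := congrArg Complex.re hw1
          simpa [Complex.re_sum] using this
        calc ε = (∑ j, (w j).re) * ε := by rw [hwsum, one_mul]
          _ = ∑ j, (w j).re * ε := by rw [Finset.sum_mul]
          _ ≤ ∑ j, (w j * φ (p j)).re := Finset.sum_le_sum fun j _ => hterm j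
      have hnorm' : ε ≤ ‖BB φ p w (fun _ : Fin 1 => (1:Γ)) (fun _ : Fin 1 => (1:ℂ))‖ := by
        refine le_trans hre ?_
        exact Complex.re_le_norm _
      nlinarith [norm_nonneg (BB φ p w (fun _ : Fin 1 => (1:Γ)) (fun _ : Fin 1 => (1:ℂ)))]
    have hQcpos : 0 < Qc := lt_of_lt_of_le (by positivity) hεQ
    have hunif : ∀ g : Γ, ‖BB φ (fun j => g * p j) w p w - (Qc:ℂ)‖ ≤ δ/4 * Qc := by
      intro g
      set gp : Fin m → Γ := fun j => g * p j with hgpdef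
      set X := BB φ p w gp w with hXdef
      have hXc : BB φ gp w p w = (starRingEnd ℂ) X := BB_conj hφherm p w gp w
      have hBgp : BB φ gp w gp w = BB φ p w p w := BB_translate φ g p w p w
      -- membership of the midpoint in S
      have hhalf : (0:ℂ) ≤ ((2⁻¹:ℝ):ℂ) := by
        rw [Complex.zero_le_real]
        norm_num
      have hmidS : (BB φ (Fin.append p gp) (fun j => ((2⁻¹:ℝ):ℂ) * Fin.append w w j)
          (Fin.append p gp) (fun j => ((2⁻¹:ℝ):ℂ) * Fin.append w w j)).re ∈ S := by
        refine ⟨m + m, _, _, ?_, ?_, rfl⟩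
        · intro j
          have happ : 0 ≤ Fin.append w w j := by
            refine Fin.addCases (fun i => ?_) (fun i => ?_) j
            · rw [Fin.append_left]; exact hw0 i
            · rw [Fin.append_right]; exact hw0 i
          exact mul_nonneg hhalf happ
        · rw [← Finset.mul_sum, Fin.sum_univ_add]
          simp only [Fin.append_left, Fin.append_right, hw1]
          norm_num
      have hmid_ge : m₀ ≤ (BB φ (Fin.append p gp) (fun j => ((2⁻¹:ℝ):ℂ) * Fin.append w w j)
          (Fin.append p gp) (fun j => ((2⁻¹:ℝ):ℂ) * Fin.append w w j)).re :=
        csInf_le ⟨0, hSlb⟩ hmidS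
      -- value of the midpoint
      have happw : Fin.append w w = fun j => Fin.append w w j := rfl
      have hmid_eq : BB φ (Fin.append p gp) (fun j => ((2⁻¹:ℝ):ℂ) * Fin.append w w j)
          (Fin.append p gp) (fun j => ((2⁻¹:ℝ):ℂ) * Fin.append w w j)
          = ((4⁻¹:ℝ):ℂ) * (2 * (Qc:ℂ) + X + (starRingEnd ℂ) X) := by
        rw [BB_smul_left, BB_smul_right, BB_append_left, BB_append_right, BB_append_right]
        rw [hXc, hBgp, hQring, Complex.conj_ofReal]
        push_cast
        ring
      have hmid_re : (BB φ (Fin.append p gp) (fun j => ((2⁻¹:ℝ):ℂ) * Fin.append w w j)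
          (Fin.append p gp) (fun j => ((2⁻¹:ℝ):ℂ) * Fin.append w w j)).re
          = 4⁻¹ * (2 * Qc + 2 * X.re) := by
        rw [hmid_eq]
        simp [Complex.re_ofReal_mul, Complex.add_re, Complex.conj_re, Complex.mul_re]
        ring
      -- the difference vector u = c - g·c
      have hu0 : (0:ℂ) ≤ BB φ (Fin.append p gp) (Fin.append w (fun j => (-1:ℂ) * w j))
          (Fin.append p gp) (Fin.append w (fun j => (-1:ℂ) * w j)) :=
        BB_self_nonneg hφpd _ _
      have hu_eq : BB φ (Fin.append p gp) (Fin.append w (fun j => (-1:ℂ) * w j))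
          (Fin.append p gp) (Fin.append w (fun j => (-1:ℂ) * w j))
          = 2 * (Qc:ℂ) - X - (starRingEnd ℂ) X := by
        rw [BB_append_left, BB_append_right, BB_append_right,
          BB_smul_left, BB_smul_right, BB_smul_left, BB_smul_right]
        rw [hXc, hBgp, hQring]
        simp only [map_neg, map_one]
        ring
      have hu_re : (BB φ (Fin.append p gp) (Fin.append w (fun j => (-1:ℂ) * w j))
          (Fin.append p gp) (Fin.append w (fun j => (-1:ℂ) * w j))).re
          = 2 * Qc - 2 * X.re := by
        rw [hu_eq]
        simp [Complex.sub_re, Complex.conj_re, Complex.mul_re]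
        ring
      have hQu_le : 2 * Qc - 2 * X.re ≤ 4 * δ' := by
        have h1 : 4⁻¹ * (2 * Qc + 2 * X.re) ≥ m₀ := by rw [← hmid_re]; exact hmid_ge
        have h2 : Qc < m₀ + δ' := hrlt
        linarith
      -- Cauchy–Schwarz against c
      have hBuc : BB φ (Fin.append p gp) (Fin.append w (fun j => (-1:ℂ) * w j)) p w
          = (Qc:ℂ) - (starRingEnd ℂ) X := by
        rw [BB_append_left, BB_smul_left, hXc, hQring]
        ring
      have hcs := BB_cs hφpd hφherm (Fin.append p gp) (Fin.append w (fun j => (-1:ℂ) * w j))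
        p w (by rw [← hQcdef]; exact hQcpos)
      rw [hBuc, hu_re] at hcs
      rw [← hQcdef] at hcs
      -- conclude
      have hfinal : ‖(Qc:ℂ) - (starRingEnd ℂ) X‖ ≤ δ/4 * Qc := by
        have ha := norm_nonneg ((Qc:ℂ) - (starRingEnd ℂ) X)
        have hb : ‖(Qc:ℂ) - (starRingEnd ℂ) X‖^2 ≤ (2 * Qc - 2 * X.re) * Qc := hcs
        have hc' : (2 * Qc - 2 * X.re) * Qc ≤ 4 * δ' * Qc :=
          mul_le_mul_of_nonneg_right hQu_le hQcpos.le
        have hd' : 4 * δ' * Qc ≤ (δ/4 * Qc)^2 := by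
          rw [hδ'def]
          have : 4 * (ε * δ / 8)^2 * Qc = (ε^2) * (δ^2) * Qc / 16 := by ring
          rw [this]
          have h16 : (δ/4 * Qc)^2 = Qc * (δ^2) * Qc / 16 := by ring
          rw [h16]
          have := mul_le_mul_of_nonneg_right hεQ (by positivity : (0:ℝ) ≤ (δ^2) * Qc / 16)
          calc ε^2 * (δ^2) * Qc / 16 = ε^2 * ((δ^2) * Qc / 16) := by ring
            _ ≤ Qc * ((δ^2) * Qc / 16) := this
            _ = Qc * (δ^2) * Qc / 16 := by ring
        nlinarith [ha, hb, hc', hd', mul_nonneg (mul_nonneg (le_of_lt hδ) (by norm_num : (0:ℝ) ≤ 4⁻¹)) hQcpos.le]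
      rw [hXc]
      calc ‖(starRingEnd ℂ) X - (Qc:ℂ)‖ = ‖(Qc:ℂ) - (starRingEnd ℂ) X‖ := norm_sub_rev _ _
        _ ≤ δ/4 * Qc := hfinal
    -- transfer to the functions fᵢ
    set η : ℝ := Qc / 2 * min (δ/4) 1 with hηdef
    have hηpos : 0 < η := by
      have : (0:ℝ) < min (δ/4) 1 := lt_min (by positivity) one_pos
      positivity
    have hη1 : η ≤ Qc * δ / 8 := by
      have h1 : min (δ/4) 1 ≤ δ/4 := min_le_left _ _
      have := mul_le_mul_of_nonneg_left h1 (by positivity : (0:ℝ) ≤ Qc / 2)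
      calc η ≤ Qc/2 * (δ/4) := this
        _ = Qc * δ / 8 := by ring
    have hη2 : η ≤ Qc / 2 := by
      have h1 : min (δ/4) 1 ≤ 1 := min_le_right _ _
      have := mul_le_mul_of_nonneg_left h1 (by positivity : (0:ℝ) ≤ Qc / 2)
      simpa using this
    have hev : ∀ᶠ i in (U : Filter I), ∀ g ∈ insert (1:Γ) F,
        ‖BB (f i) (fun j => g * p j) w p w - BB φ (fun j => g * p j) w p w‖ < η := by
      rw [Filter.eventually_all_finset]
      intro g hg
      have htend : Tendsto (fun i => BB (f i) (fun j => g * p j) w p w) (U : Filter I)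
          (nhds (BB φ (fun j => g * p j) w p w)) := by
        simp only [BB]
        refine tendsto_finset_sum _ fun j _ => tendsto_finset_sum _ fun k _ => ?_
        exact (hφtend _).const_mul _
      have := Metric.tendsto_nhds.mp htend η hηpos
      filter_upwards [this] with i hi
      rwa [dist_eq_norm] at hi
    obtain ⟨i, hi⟩ := hev.exists
    have hp1 : (fun j => (1:Γ) * p j) = p := by funext j; rw [one_mul]
    have hiD : ‖BB (f i) p w p w - (Qc:ℂ)‖ < η := by
      have h1 := hi 1 (Finset.mem_insert_self 1 F)
      rwa [hp1, hQring] at h1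
    set D := BB (f i) p w p w with hDdef
    have hD0 : 0 ≤ D := BB_self_nonneg (hpd i) p w
    have hDeq : D = (D.re : ℂ) := real_of_nonneg hD0
    have hDre : Qc/2 < D.re := by
      have h1 : |D.re - Qc| ≤ ‖D - (Qc:ℂ)‖ := by
        have h2 := Complex.abs_re_le_norm (D - (Qc:ℂ))
        simpa [Complex.sub_re] using h2
      have h3 : |D.re - Qc| < η := lt_of_le_of_lt h1 hiD
      have h4 := abs_lt.mp h3
      linarith [h4.1, hη2]
    have hDpos : 0 < D.re := lt_trans (by positivity) hDre
    have hDne : D ≠ 0 := by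
      rw [hDeq]
      exact_mod_cast Complex.ofReal_ne_zero.mpr hDpos.ne'
    have hDnorm : ‖D‖ = D.re := by
      conv_lhs => rw [hDeq]
      rw [Complex.norm_real, Real.norm_eq_abs]
      exact _root_.abs_of_nonneg hDpos.le
    refine ⟨fun g => BB (f i) (fun j => g * p j) w p w / D, ?_, ?_, ?_, ?_⟩
    · -- vanishes at infinity
      intro θ hθ
      set K : ℝ := ∑ j, ∑ k, ‖w j‖ * ‖w k‖ with hKdef
      have hK0 : 0 ≤ K := Finset.sum_nonneg fun j _ => Finset.sum_nonneg fun k _ =>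
        mul_nonneg (norm_nonneg _) (norm_nonneg _)
      set θ' : ℝ := θ * D.re / (K + 1) with hθ'def
      have hθ'pos : 0 < θ' := div_pos (mul_pos hθ hDpos) (by linarith)
      have hfin : ∀ (j k : Fin m), {g : Γ | θ' ≤ ‖f i ((p k)⁻¹ * (g * p j))‖}.Finite := by
        intro j k
        have hZ := hvan i θ' hθ'pos
        have hinj : Function.Injective (fun g : Γ => (p k)⁻¹ * (g * p j)) := by
          intro a b hab
          simp only at hab
          have h1 := mul_left_cancel hab
          exact mul_right_cancel h1
        have hset : {g : Γ | θ' ≤ ‖f i ((p k)⁻¹ * (g * p j))‖}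
            = (fun g : Γ => (p k)⁻¹ * (g * p j)) ⁻¹' {z : Γ | θ' ≤ ‖f i z‖} := rfl
        rw [hset]
        exact Set.Finite.preimage (hinj.injOn) hZ
      refine Set.Finite.subset
        (Set.finite_iUnion (fun j : Fin m => Set.finite_iUnion (fun k : Fin m => hfin j k))) ?_
      intro g hg
      rw [Set.mem_setOf_eq] at hg
      by_contra hnot
      simp only [Set.mem_iUnion, Set.mem_setOf_eq, not_exists, not_le] at hnot
      have hbound : ‖BB (f i) (fun j => g * p j) w p w‖ ≤ K * θ' := by
        rw [hKdef, Finset.sum_mul]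
        refine (norm_sum_le _ _).trans (Finset.sum_le_sum fun j _ => ?_)
        rw [Finset.sum_mul]
        refine (norm_sum_le _ _).trans (Finset.sum_le_sum fun k _ => ?_)
        show ‖w j * (starRingEnd ℂ) (w k) * f i ((p k)⁻¹ * (g * p j))‖ ≤ ‖w j‖ * ‖w k‖ * θ'
        calc ‖w j * (starRingEnd ℂ) (w k) * f i ((p k)⁻¹ * (g * p j))‖
            = ‖w j‖ * ‖w k‖ * ‖f i ((p k)⁻¹ * (g * p j))‖ := by
              rw [norm_mul, norm_mul, RCLike.norm_conj]
          _ ≤ ‖w j‖ * ‖w k‖ * θ' := by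
              refine mul_le_mul_of_nonneg_left (hnot j k).le ?_
              positivity
      have hlt : ‖BB (f i) (fun j => g * p j) w p w / D‖ < θ := by
        rw [norm_div, hDnorm, div_lt_iff₀ hDpos]
        have h1 : K * θ' < (K + 1) * θ' := by nlinarith
        have h2 : (K + 1) * θ' = θ * D.re := by
          rw [hθ'def]
          field_simp
        calc ‖BB (f i) (fun j => g * p j) w p w‖ ≤ K * θ' := hbound
          _ < (K + 1) * θ' := h1
          _ = θ * D.re := h2
      exact absurd hg (not_le.mpr hlt)
    · -- positive definite
      intro n gs d
      have key := BB_translate_posdef (hpd i) p w n gs d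
      have hinv : (0:ℂ) ≤ D⁻¹ := by
        rw [hDeq, ← Complex.ofReal_inv, Complex.zero_le_real]
        positivity
      refine le_of_le_of_eq (mul_nonneg key hinv) ?_
      rw [Finset.sum_mul]
      refine Finset.sum_congr rfl fun j _ => ?_
      rw [Finset.sum_mul]
      refine Finset.sum_congr rfl fun k _ => ?_
      show d j * (starRingEnd ℂ) (d k) * BB (f i) (fun x => ((gs k)⁻¹ * gs j) * p x) w p w * D⁻¹
        = d j * (starRingEnd ℂ) (d k) * (BB (f i) (fun x => ((gs k)⁻¹ * gs j) * p x) w p w / D)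
      rw [div_eq_mul_inv]
      ring
    · -- value 1 at identity
      show BB (f i) (fun j => (1:Γ) * p j) w p w / D = 1
      rw [hp1]
      exact div_self hDne
    · -- close to 1 on F
      intro g hg
      clear_value D
      clear hDdef
      clear_value Qc η δ' m₀ S U
      have hN := hi g (Finset.mem_insert_of_mem hg)
      have hNφ := hunif g
      have hND : ‖BB (f i) (fun j => g * p j) w p w - D‖ < Qc * δ / 2 := by
        have h1 : ‖BB (f i) (fun j => g * p j) w p w - D‖
            ≤ ‖BB (f i) (fun j => g * p j) w p w - BB φ (fun j => g * p j) w p w‖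
            + ‖BB φ (fun j => g * p j) w p w - (Qc:ℂ)‖ + ‖(Qc:ℂ) - D‖ := by
          have h0 := dist_triangle4 (BB (f i) (fun j => g * p j) w p w)
            (BB φ (fun j => g * p j) w p w) ((Qc:ℂ)) D
          simpa [dist_eq_norm] using h0
        have h2 : ‖(Qc:ℂ) - D‖ = ‖D - (Qc:ℂ)‖ := norm_sub_rev _ _
        rw [h2] at h1
        linarith only [h1, hN, hNφ, hiD, hη1, hQcpos, hδ]
      show ‖BB (f i) (fun j => g * p j) w p w / D - 1‖ < δ
      rw [div_sub_one hDne, norm_div, hDnorm, div_lt_iff₀ hDpos]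
      have h5 := mul_le_mul_of_nonneg_left hDre.le hδ.le
      linarith only [hND, h5]
  -- assemble the net
  refine ⟨Finset Γ × ℕ, inferInstance, ⟨(∅, 0)⟩, ?_, ?_⟩
  · constructor
    rintro ⟨F1, n1⟩ ⟨F2, n2⟩
    exact ⟨(F1 ∪ F2, max n1 n2),
      ⟨Finset.subset_union_left, le_max_left _ _⟩,
      ⟨Finset.subset_union_right, le_max_right _ _⟩⟩
  · have hsel : ∀ j : Finset Γ × ℕ, ∃ h : Γ → ℂ,
        VanishesAtInftyDiscrete h ∧ IsPosDefFn h ∧ h 1 = 1 ∧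
        ∀ g ∈ j.1, ‖h g - 1‖ < 1/(j.2+1 : ℝ) := fun j => main j.1 _ (by positivity)
    choose H hH1 hH2 hH3 hH4 using hsel
    refine ⟨H, fun j => ⟨hH1 j, hH2 j, hH3 j⟩, ?_⟩
    intro g δ hδ
    obtain ⟨n₀, hn₀⟩ := exists_nat_one_div_lt hδ
    refine ⟨({g}, n₀), ?_⟩
    rintro ⟨Fj, nj⟩ ⟨hF, hn⟩
    have hgF : g ∈ Fj := hF (Finset.mem_singleton_self g)
    have h1 := hH4 (Fj, nj) g hgF
    have h2 : 1/(nj+1 : ℝ) ≤ 1/(n₀+1 : ℝ) := by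
      apply one_div_le_one_div_of_le
      · positivity
      · exact_mod_cast Nat.succ_le_succ hn
    calc ‖H (Fj, nj) g - 1‖ < 1/(nj+1 : ℝ) := h1
      _ ≤ 1/(n₀+1 : ℝ) := h2
      _ < δ := hn₀
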